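/- The function x ↦ cosh⁻²(x/√2) - 2 tanh²(x/√2) satisfies H f = 0, where H f = -f'' - 3 cosh⁻²(x/√2) f; moreover f is bounded on ℝ but not in L²(ℝ) (so 0 is a resonance, not an eigenvalue). -/

import Mathlib

open Real MeasureTheory

private lemma hasDerivAt_u (x : ℝ) :
    HasDerivAt (fun x : ℝ => x / Real.sqrt 2) (1 / Real.sqrt 2) x := by
  simpa using (hasDerivAt_id x).div_const (Real.sqrt 2)

private lemma hasDerivAt_g (x : ℝ) :
    HasDerivAt (fun x : ℝ => 3 * (Real.cosh (x / Real.sqrt 2))⁻¹ ^ 2 - 2)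
      (-3 * Real.sqrt 2 * (Real.sinh (x / Real.sqrt 2) / Real.cosh (x / Real.sqrt 2) ^ 3)) x := by
  have hc : Real.cosh (x / Real.sqrt 2) ≠ 0 := (Real.cosh_pos _).ne'
  have h1 : HasDerivAt (fun x : ℝ => Real.cosh (x / Real.sqrt 2))
      (Real.sinh (x / Real.sqrt 2) * (1 / Real.sqrt 2)) x :=
    (Real.hasDerivAt_cosh _).comp x (hasDerivAt_u x)
  have h2 := ((h1.fun_inv hc).fun_pow 2).const_mul (3 : ℝ)
  have := h2.sub_const (2 : ℝ)
  refine (this.congr_deriv ?_)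
  symm
  have hs2 : Real.sqrt 2 ≠ 0 := by positivity
  norm_num
  field_simp
  have h2m : Real.sqrt 2 * Real.sqrt 2 = 2 := Real.mul_self_sqrt (by norm_num)
  linear_combination (-Real.sinh (x / Real.sqrt 2)) * h2m

private lemma hasDerivAt_g' (x : ℝ) :
    HasDerivAt (fun x : ℝ =>
        -3 * Real.sqrt 2 * (Real.sinh (x / Real.sqrt 2) / Real.cosh (x / Real.sqrt 2) ^ 3))
      (-3 * (Real.cosh (x / Real.sqrt 2) ^ 2 - 3 * Real.sinh (x / Real.sqrt 2) ^ 2)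
          / Real.cosh (x / Real.sqrt 2) ^ 4) x := by
  have hc : Real.cosh (x / Real.sqrt 2) ≠ 0 := (Real.cosh_pos _).ne'
  have hcp : HasDerivAt (fun x : ℝ => Real.cosh (x / Real.sqrt 2))
      (Real.sinh (x / Real.sqrt 2) * (1 / Real.sqrt 2)) x :=
    (Real.hasDerivAt_cosh _).comp x (hasDerivAt_u x)
  have hsp : HasDerivAt (fun x : ℝ => Real.sinh (x / Real.sqrt 2))
      (Real.cosh (x / Real.sqrt 2) * (1 / Real.sqrt 2)) x :=
    (Real.hasDerivAt_sinh _).comp x (hasDerivAt_u x)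
  have h3 : HasDerivAt (fun x : ℝ => Real.cosh (x / Real.sqrt 2) ^ 3)
      (3 * Real.cosh (x / Real.sqrt 2) ^ 2 * (Real.sinh (x / Real.sqrt 2) * (1 / Real.sqrt 2))) x := by
    simpa using hcp.fun_pow 3
  have hc3 : Real.cosh (x / Real.sqrt 2) ^ 3 ≠ 0 := pow_ne_zero _ hc
  have h4 := (hsp.div h3 hc3).const_mul (-3 * Real.sqrt 2)
  refine (h4.congr_deriv ?_)
  symm
  have hs2 : Real.sqrt 2 ≠ 0 := by positivity
  have h2 : Real.sqrt 2 * Real.sqrt 2 = 2 := Real.mul_self_sqrt (by norm_num)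
  field_simp

theorem kink_zero_resonance (f : ℝ → ℝ)
    (hf : ∀ x, f x = (Real.cosh (x / Real.sqrt 2))⁻¹ ^ 2
        - 2 * Real.tanh (x / Real.sqrt 2) ^ 2) :
    (∀ x : ℝ,
      -(deriv (deriv f) x) - 3 * (Real.cosh (x / Real.sqrt 2))⁻¹ ^ 2 * f x = 0)
    ∧ (∃ C : ℝ, ∀ x : ℝ, |f x| ≤ C)
    ∧ ¬ MeasureTheory.MemLp f 2 (volume : Measure ℝ) := by
  -- f = 3 sech² - 2
  have hfe : f = fun x => 3 * (Real.cosh (x / Real.sqrt 2))⁻¹ ^ 2 - 2 := by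
    funext x
    have hc : Real.cosh (x / Real.sqrt 2) ≠ 0 := (Real.cosh_pos _).ne'
    have hsq := Real.cosh_sq (x / Real.sqrt 2)
    rw [hf, Real.tanh_eq_sinh_div_cosh]
    field_simp
    nlinarith [hsq]
  have hderiv : deriv f = fun x =>
      -3 * Real.sqrt 2 * (Real.sinh (x / Real.sqrt 2) / Real.cosh (x / Real.sqrt 2) ^ 3) := by
    funext x
    rw [hfe]
    exact (hasDerivAt_g x).deriv
  have hderiv2 : ∀ x, deriv (deriv f) x =
      -3 * (Real.cosh (x / Real.sqrt 2) ^ 2 - 3 * Real.sinh (x / Real.sqrt 2) ^ 2)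
        / Real.cosh (x / Real.sqrt 2) ^ 4 := by
    intro x
    rw [hderiv]
    exact (hasDerivAt_g' x).deriv
  refine ⟨?_, ⟨3, ?_⟩, ?_⟩
  · intro x
    rw [hderiv2 x, hfe]
    have hc : Real.cosh (x / Real.sqrt 2) ≠ 0 := (Real.cosh_pos _).ne'
    have hsq := Real.cosh_sq (x / Real.sqrt 2)
    field_simp
    nlinarith [hsq]
  · intro x
    rw [hfe]
    have hc1 : (1 : ℝ) ≤ Real.cosh (x / Real.sqrt 2) := Real.one_le_cosh _
    have hc : (0 : ℝ) < Real.cosh (x / Real.sqrt 2) := Real.cosh_pos _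
    have hinv : (Real.cosh (x / Real.sqrt 2))⁻¹ ≤ 1 := by
      rw [inv_le_one_iff₀]; right; exact hc1
    have hinvpos : (0 : ℝ) < (Real.cosh (x / Real.sqrt 2))⁻¹ := by positivity
    rw [abs_le]
    constructor <;> nlinarith
  · intro hmem
    have hsqint : Integrable (fun x => f x ^ 2) volume :=
      (memLp_two_iff_integrable_sq hmem.aestronglyMeasurable).mp hmem
    -- On [2,∞), f x ^ 2 ≥ 1
    have hge : ∀ x ∈ Set.Ici (2 : ℝ), (1 : ℝ) ≤ f x ^ 2 := by
      intro x hx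
      have hx2 : (2 : ℝ) ≤ x := hx
      have hs2 : Real.sqrt 2 * Real.sqrt 2 = 2 := Real.mul_self_sqrt (by norm_num)
      have hspos : (0 : ℝ) < Real.sqrt 2 := by positivity
      have ht : Real.sqrt 2 ≤ x / Real.sqrt 2 := by
        rw [le_div_iff₀ hspos]; nlinarith
      have htpos : (0 : ℝ) < x / Real.sqrt 2 := lt_of_lt_of_le hspos ht
      have hsinh : x / Real.sqrt 2 ≤ Real.sinh (x / Real.sqrt 2) :=
        Real.self_le_sinh_iff.mpr htpos.le
      have hcsq : (3 : ℝ) ≤ Real.cosh (x / Real.sqrt 2) ^ 2 := by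
        have := Real.cosh_sq (x / Real.sqrt 2)
        nlinarith
      have hc : (0 : ℝ) < Real.cosh (x / Real.sqrt 2) := Real.cosh_pos _
      have hinv : (Real.cosh (x / Real.sqrt 2))⁻¹ ^ 2 ≤ 1 / 3 := by
        rw [inv_pow, inv_le_comm₀ (by positivity) (by norm_num)]
        norm_num
        linarith
      have hinvpos : (0 : ℝ) ≤ (Real.cosh (x / Real.sqrt 2))⁻¹ ^ 2 := by positivity
      rw [hfe]
      nlinarith
    have hIO : IntegrableOn (fun _ : ℝ => (1 : ℝ)) (Set.Ici 2) volume := by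
      refine (hsqint.integrableOn).mono' aestronglyMeasurable_const ?_
      refine (ae_restrict_iff' measurableSet_Ici).mpr (ae_of_all _ ?_)
      intro x hx
      simpa using hge x hx
    rw [integrableOn_const_iff] at hIO
    rcases hIO with h | h
    · norm_num at h
    · rw [Real.volume_Ici] at h
      exact absurd h (by simp)
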